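/- Let X be a compact metric space, let K_n be nonempty closed subsets of X, and suppose the functions dist(·, K_n) converge uniformly on X to a function f. Then the set K := {p ∈ X : f(p) = 0} is nonempty and closed, and f = dist(·, K). -/

import Mathlib

open Metric

/-- Let `X` be a compact metric space, `K n` nonempty closed subsets of `X`, and suppose
the functions `dist(·, K n)` converge uniformly on `X` to a function `f`.  Then
`K := {p ∈ X : f p = 0}` is nonempty and closed, and `f = dist(·, K)`. -/
theorem stmt10 {X : Type*} [MetricSpace X] [CompactSpace X]
    (K : ℕ → Set X) (hne : ∀ n, (K n).Nonempty) (hcl : ∀ n, IsClosed (K n))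
    (f : X → ℝ)
    (hconv : TendstoUniformly (fun n p => Metric.infDist p (K n)) f Filter.atTop) :
    ({p : X | f p = 0}).Nonempty ∧ IsClosed {p : X | f p = 0} ∧
    ∀ p : X, f p = Metric.infDist p {q : X | f q = 0} := by
  -- key auxiliary fact
  have aux : ∀ p : X, ∃ q : X, f q = 0 ∧ dist p q = f p := by
    intro p
    choose qn hqmem hqdist using fun n =>
      ((hcl n).isCompact).exists_infDist_eq_dist (hne n) p
    obtain ⟨q, -, φ, hφ, hqt⟩ := isCompact_univ.tendsto_subseq (x := qn)
      (fun n => Set.mem_univ _)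
    have hdq : Filter.Tendsto (fun n => dist q (qn (φ n))) Filter.atTop (nhds 0) := by
      have h := (tendsto_const_nhds (x := q) (f := Filter.atTop (α := ℕ))).dist hqt
      simpa using h
    have hfq : f q = 0 := by
      have h1 : Filter.Tendsto (fun n => infDist q (K (φ n))) Filter.atTop (nhds (f q)) :=
        (hconv.tendsto_at q).comp (hφ.tendsto_atTop)
      have h2 : Filter.Tendsto (fun n => infDist q (K (φ n))) Filter.atTop (nhds 0) := by
        refine squeeze_zero (fun n => infDist_nonneg) (fun n => ?_) hdq
        exact infDist_le_dist_of_mem (hqmem (φ n))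
      exact tendsto_nhds_unique h1 h2
    have hdpq : dist p q = f p := by
      have h1 : Filter.Tendsto (fun n => dist p (qn (φ n))) Filter.atTop (nhds (dist p q)) :=
        tendsto_const_nhds.dist hqt
      have h2 : Filter.Tendsto (fun n => dist p (qn (φ n))) Filter.atTop (nhds (f p)) := by
        exact Filter.Tendsto.congr (fun n => hqdist (φ n))
          ((hconv.tendsto_at p).comp (hφ.tendsto_atTop))
      exact tendsto_nhds_unique h1 h2
    exact ⟨q, hfq, hdpq⟩
  have hfc : Continuous f :=
    hconv.continuous (Filter.Eventually.of_forall fun n => continuous_infDist_pt (K n)).frequently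
  have hK0ne : ({p : X | f p = 0}).Nonempty := by
    obtain ⟨p, -⟩ := hne 0
    obtain ⟨q, hq, -⟩ := aux p
    exact ⟨q, hq⟩
  refine ⟨hK0ne, isClosed_eq hfc continuous_const, fun p => ?_⟩
  obtain ⟨q, hq0, hqd⟩ := aux p
  refine le_antisymm ?_ ?_
  · haveI := hK0ne.to_subtype
    rw [infDist_eq_iInf]
    refine le_ciInf fun y' => ?_
    obtain ⟨y, hy⟩ := y'
    have hle : ∀ n, infDist p (K n) ≤ infDist y (K n) + dist p y := fun n =>
      infDist_le_infDist_add_dist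
    have h1 : Filter.Tendsto (fun n => infDist p (K n)) Filter.atTop (nhds (f p)) :=
      hconv.tendsto_at p
    have h2 : Filter.Tendsto (fun n => infDist y (K n) + dist p y) Filter.atTop
        (nhds (f y + dist p y)) := (hconv.tendsto_at y).add tendsto_const_nhds
    have := le_of_tendsto_of_tendsto' h1 h2 hle
    simpa [Set.mem_setOf_eq.mp hy] using this
  · calc infDist p {q : X | f q = 0} ≤ dist p q := infDist_le_dist_of_mem hq0
      _ = f p := hqd
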